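/- arXiv:1910.14018 — 2 statements merged into one kernel-verified Lean document; each statement's English description precedes it below -/
import Mathlib

section
/- Let -1 < a < 1 and b ∈ ℝ, and define the Abbe value of the ARMA(1,1) process as A(a,b) = 1 - a + b(a² - 1)/(1 + 2ab + b²). Then 0 < A(a,b) < 2. -/
/-- The Abbe value of the ARMA(1,1) process lies strictly between 0 and 2. -/
theorem arma_abbe_bounds (a b : ℝ) (ha1 : -1 < a) (ha2 : a < 1)
    (A : ℝ) (hA : A = 1 - a + b * (a ^ 2 - 1) / (1 + 2 * a * b + b ^ 2)) :
    0 < A ∧ A < 2 := by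
  have hD : 0 < 1 + 2 * a * b + b ^ 2 := by nlinarith [sq_nonneg (a + b), sq_nonneg a]
  have hD' : (1 + 2 * a * b + b ^ 2) ≠ 0 := ne_of_gt hD
  constructor
  · have h : A = ((1 - a) * (1 - b + a * b + b ^ 2)) / (1 + 2 * a * b + b ^ 2) := by
      rw [hA, eq_div_iff hD', add_mul, div_mul_cancel₀ _ hD']; ring
    rw [h]
    have hN : 0 < 1 - b + a * b + b ^ 2 := by
      nlinarith [sq_nonneg (2 * b + a - 1), mul_pos (by linarith : (0:ℝ) < 1 + a) (by linarith : (0:ℝ) < 3 - a)]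
    exact div_pos (mul_pos (by linarith) hN) hD
  · have h : 2 - A = ((1 + a) * (1 + b + a * b + b ^ 2)) / (1 + 2 * a * b + b ^ 2) := by
      rw [hA]; field_simp; ring
    have hp : 0 < ((1 + a) * (1 + b + a * b + b ^ 2)) / (1 + 2 * a * b + b ^ 2) :=
      div_pos (mul_pos (by linarith) (by
        nlinarith [sq_nonneg (2 * b + a + 1), mul_pos (by linarith : (0:ℝ) < 1 - a) (by linarith : (0:ℝ) < 3 + a)])) hD
    linarith [h ▸ hp]
end

section
/- For all real b₁, b₂, the MA(2) Abbe value A(b₁,b₂) = 1 - b₁(b₂+1)/(1 + b₁² + b₂²) satisfies 1 - 1/√2 ≤ A(b₁,b₂) ≤ 1 + 1/√2; the minimum is attained at (b₁,b₂) = (√2, 1) and the maximum at (b₁,b₂) = (-√2, 1). Equivalently, |b₁(b₂+1)| ≤ (1 + b₁² + b₂²)/√2 for all real b₁, b₂. -/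
lemma key (b₁ b₂ : ℝ) : |b₁ * (b₂ + 1)| ≤ (1 + b₁ ^ 2 + b₂ ^ 2) / Real.sqrt 2 := by
  have h2 : Real.sqrt 2 > 0 := by positivity
  have hsq : Real.sqrt 2 ^ 2 = 2 := Real.sq_sqrt (by norm_num)
  rw [abs_le]
  constructor
  · rw [neg_le, le_div_iff₀ h2]
    nlinarith [sq_nonneg (Real.sqrt 2 * b₁ + (b₂ + 1)), sq_nonneg (b₂ - 1)]
  · rw [le_div_iff₀ h2]
    nlinarith [sq_nonneg (Real.sqrt 2 * b₁ - (b₂ + 1)), sq_nonneg (b₂ - 1)]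

/-- The MA(2) Abbe value `A(b₁,b₂) = 1 - b₁(b₂+1)/(1+b₁²+b₂²)` lies in
`[1 - 1/√2, 1 + 1/√2]`, with extrema at `(±√2, 1)`; equivalently
`|b₁(b₂+1)| ≤ (1+b₁²+b₂²)/√2`. -/
theorem ma2_abbe_bounds (A : ℝ → ℝ → ℝ)
    (hA : ∀ b₁ b₂ : ℝ, A b₁ b₂ = 1 - b₁ * (b₂ + 1) / (1 + b₁ ^ 2 + b₂ ^ 2)) :
    (∀ b₁ b₂ : ℝ, 1 - 1 / Real.sqrt 2 ≤ A b₁ b₂ ∧ A b₁ b₂ ≤ 1 + 1 / Real.sqrt 2) ∧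
      A (Real.sqrt 2) 1 = 1 - 1 / Real.sqrt 2 ∧
      A (-Real.sqrt 2) 1 = 1 + 1 / Real.sqrt 2 ∧
      (∀ b₁ b₂ : ℝ, |b₁ * (b₂ + 1)| ≤ (1 + b₁ ^ 2 + b₂ ^ 2) / Real.sqrt 2) := by
  have h2 : Real.sqrt 2 > 0 := by positivity
  have hsq : Real.sqrt 2 ^ 2 = 2 := Real.sq_sqrt (by norm_num)
  refine ⟨?_, ?_, ?_, key⟩
  · intro b₁ b₂
    have hd : (0:ℝ) < 1 + b₁ ^ 2 + b₂ ^ 2 := by positivity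
    have hk := abs_le.mp (key b₁ b₂)
    have hk2 : b₁ * (b₂ + 1) * Real.sqrt 2 ≤ 1 + b₁ ^ 2 + b₂ ^ 2 := (le_div_iff₀ h2).mp hk.2
    have hk1 : -(b₁ * (b₂ + 1)) * Real.sqrt 2 ≤ 1 + b₁ ^ 2 + b₂ ^ 2 := (le_div_iff₀ h2).mp (neg_le.mpr hk.1)
    have hL : b₁ * (b₂ + 1) / (1 + b₁ ^ 2 + b₂ ^ 2) ≤ 1 / Real.sqrt 2 := by
      rw [div_le_div_iff₀ hd h2]
      linarith
    have hR : -(1 / Real.sqrt 2) ≤ b₁ * (b₂ + 1) / (1 + b₁ ^ 2 + b₂ ^ 2) := by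
      rw [neg_le, ← neg_div, div_le_div_iff₀ hd h2]
      linarith
    rw [hA]
    constructor <;> linarith
  · rw [hA]
    have : (1:ℝ) + Real.sqrt 2 ^ 2 + 1 ^ 2 = 2 * Real.sqrt 2 * Real.sqrt 2 := by nlinarith
    rw [this]
    field_simp
    ring
  · rw [hA]
    have : (1:ℝ) + (-Real.sqrt 2) ^ 2 + 1 ^ 2 = 2 * Real.sqrt 2 * Real.sqrt 2 := by nlinarith
    rw [this]
    field_simp
    ring
end
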